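/- If ∇f is Lipschitz continuous with constant L > 0, then the step size τₖ produced by the non-monotone backtracking line search in the inexact SGP method satisfies τₖ ≥ τ_min := min{1, ω̲(1−σ)/(α_max μ L)}. -/

import Mathlib

set_option maxHeartbeats 1000000

open RealInnerProductSpace

abbrev EucSp (n : ℕ) := EuclideanSpace ℝ (Fin n)

noncomputable def dipr {n : ℕ} (D : Matrix (Fin n) (Fin n) ℝ) (x y : EucSp n) : ℝ :=
  ⟪(Matrix.toEuclideanLin D) x, y⟫

noncomputable def dnorm {n : ℕ} (D : Matrix (Fin n) (Fin n) ℝ) (x : EucSp n) : ℝ :=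
  Real.sqrt (dipr D x x)

lemma descent {n : ℕ} (f : EucSp n → ℝ) (g : EucSp n → EucSp n)
    (hf : ∀ x, HasGradientAt f (g x) x) (L : ℝ) (hL : 0 ≤ L)
    (hLip : ∀ x y, ‖g x - g y‖ ≤ L * ‖x - y‖) (x y : EucSp n) :
    f y ≤ f x + ⟪g x, y - x⟫ + L / 2 * ‖y - x‖ ^ 2 := by
  set d := y - x with hd
  have gcont : Continuous g := by
    have : LipschitzWith L.toNNReal g := by
      apply LipschitzWith.of_dist_le_mul
      intro a b
      rw [dist_eq_norm, dist_eq_norm, Real.coe_toNNReal L hL]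
      exact hLip a b
    exact this.continuous
  have hderiv : ∀ t : ℝ, HasDerivAt (fun t : ℝ => f (x + t • d))
      (⟪g (x + t • d), d⟫) t := by
    intro t
    have hc : HasDerivAt (fun t : ℝ => x + t • d) d t := by
      simpa using ((hasDerivAt_id t).smul_const d).const_add x
    have := ((hf (x + t • d)).hasFDerivAt).comp_hasDerivAt t hc
    simpa [InnerProductSpace.toDual_apply_apply, Function.comp_def] using this
  have hcont : Continuous (fun t : ℝ => ⟪g (x + t • d), d⟫) := by
    exact Continuous.inner (gcont.comp (by continuity)) continuous_const
  have h0 : x + (0:ℝ) • d = x := by simp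
  have h1 : x + (1:ℝ) • d = y := by simp [hd]
  have hFTC := intervalIntegral.integral_eq_sub_of_hasDerivAt
      (fun t (_ : t ∈ Set.uIcc (0:ℝ) 1) => hderiv t) (hcont.intervalIntegrable 0 1)
  rw [h0, h1] at hFTC
  have hint1 : IntervalIntegrable (fun t : ℝ => ⟪g (x + t • d), d⟫)
      MeasureTheory.volume 0 1 := hcont.intervalIntegrable 0 1
  have hcont2 : Continuous (fun t : ℝ => ⟪g x, d⟫ + L * t * ‖d‖ ^ 2) :=
    continuous_const.add (((continuous_const.mul continuous_id').mul continuous_const))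
  have hint2 : IntervalIntegrable (fun t : ℝ => ⟪g x, d⟫ + L * t * ‖d‖ ^ 2)
      MeasureTheory.volume 0 1 := hcont2.intervalIntegrable 0 1
  have hmono := intervalIntegral.integral_mono_on (by norm_num : (0:ℝ) ≤ 1) hint1 hint2 ?_
  · have hrhs : (∫ t in (0:ℝ)..1, (⟪g x, d⟫ + L * t * ‖d‖ ^ 2)) =
        ⟪g x, d⟫ + L / 2 * ‖d‖ ^ 2 := by
      have heq : (fun t : ℝ => L * t * ‖d‖ ^ 2) = fun t : ℝ => (L * ‖d‖ ^ 2) * t := by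
        funext t; ring
      rw [intervalIntegral.integral_add intervalIntegrable_const
        ((show Continuous (fun t : ℝ => L * t * ‖d‖ ^ 2) from
          (continuous_const.mul continuous_id').mul continuous_const).intervalIntegrable 0 1),
        heq, intervalIntegral.integral_const_mul, integral_id]
      simp; ring
    rw [hrhs] at hmono
    linarith
  · intro t ht
    have hi := real_inner_le_norm (g (x + t • d) - g x) d
    rw [inner_sub_left] at hi
    have h2 : ‖g (x + t • d) - g x‖ ≤ L * (t * ‖d‖) := by
      have := hLip (x + t • d) x
      simpa [norm_smul, abs_of_nonneg ht.1] using this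
    nlinarith [norm_nonneg d, norm_nonneg (g (x + t • d) - g x), ht.1]

lemma toEuclideanLin_inv_cancel {n : ℕ} {D : Matrix (Fin n) (Fin n) ℝ} (hD : D.PosDef)
    (u : EucSp n) : (Matrix.toEuclideanLin D) ((Matrix.toEuclideanLin D⁻¹) u) = u := by
  have hdet : IsUnit D.det := isUnit_iff_ne_zero.mpr hD.det_pos.ne'
  simp [Matrix.toEuclideanLin_apply, Matrix.mulVec_mulVec, Matrix.mul_nonsing_inv D hdet]

lemma dipr_ge {n : ℕ} {D : Matrix (Fin n) (Fin n) ℝ} (hD : D.PosDef) {μ : ℝ}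
    (heig : ∀ i, 1 / μ ≤ hD.1.eigenvalues i) (v : EucSp n) :
    (1 / μ) * ‖v‖ ^ 2 ≤ dipr D v v := by
  set b := hD.1.eigenvectorBasis with hb
  have hbv : ∀ i, (Matrix.toEuclideanLin D) (b i) = hD.1.eigenvalues i • b i := by
    intro i
    ext j
    have := congrFun (hD.1.mulVec_eigenvectorBasis i) j
    simpa [Matrix.toEuclideanLin_apply] using this
  have hsum : v = ∑ i, b.repr v i • b i := (b.sum_repr v).symm
  have hTv : (Matrix.toEuclideanLin D) v
      = ∑ i, (hD.1.eigenvalues i * b.repr v i) • b i := by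
    conv_lhs => rw [hsum]
    rw [map_sum]
    refine Finset.sum_congr rfl fun i _ => ?_
    rw [map_smul, hbv i, smul_smul, mul_comm]
  have hQ : dipr D v v = ∑ i, hD.1.eigenvalues i * (b.repr v i) ^ 2 := by
    rw [dipr, hTv, sum_inner]
    refine Finset.sum_congr rfl fun i _ => ?_
    rw [real_inner_smul_left, ← b.repr_apply_apply]
    ring
  have hN : ‖v‖ ^ 2 = ∑ i, (b.repr v i) ^ 2 := by
    rw [← real_inner_self_eq_norm_sq]
    conv_lhs => rw [hsum]
    rw [sum_inner]
    refine Finset.sum_congr rfl fun i _ => ?_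
    rw [real_inner_smul_left, ← b.repr_apply_apply, ← hsum]
    ring
  rw [hQ, hN, Finset.mul_sum]
  refine Finset.sum_le_sum fun i _ => ?_
  exact mul_le_mul_of_nonneg_right (heig i) (sq_nonneg _)

theorem stmt15 {n : ℕ} (C : Set (EucSp n)) (hcl : IsClosed C) (hconv : Convex ℝ C)
    (f : EucSp n → ℝ) (g : EucSp n → EucSp n) (hf : ∀ x, HasGradientAt f (g x) x)
    (L μ σ ζmin αmax ωlow : ℝ) (hL : 0 < L) (hμ : 1 ≤ μ) (hσ : 0 < σ ∧ σ < 1)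
    (hζmin : 0 < ζmin ∧ ζmin < 1) (hαmax : 0 < αmax) (hω : 0 < ωlow ∧ ωlow < 1)
    (hLip : ∀ x y : EucSp n, ‖g x - g y‖ ≤ L * ‖x - y‖)
    (Dm : ℕ → Matrix (Fin n) (Fin n) ℝ) (hpos : ∀ k, (Dm k).PosDef)
    (heig : ∀ k i, 1 / μ ≤ (hpos k).1.eigenvalues i ∧ (hpos k).1.eigenvalues i ≤ μ)
    (α ζ τ ν : ℕ → ℝ)
    (hα : ∀ k, 0 < α k ∧ α k ≤ αmax) (hζ : ∀ k, ζmin < ζ k ∧ ζ k ≤ 1)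
    (hτ : ∀ k, 0 < τ k ∧ τ k ≤ 1) (hν : ∀ k, 0 ≤ ν k)
    (X w z : ℕ → EucSp n) (hXC : ∀ k, X k ∈ C)
    (hz : ∀ k, z k = X k - α k • (Matrix.toEuclideanLin (Dm k)⁻¹) (g (X k)))
    (hA1 : ∀ k, w k ∈ C ∧ ∀ y ∈ C,
      dipr (Dm k) (z k - w k) (y - w k) ≤ ((1 - ζ k) / 2) * (dnorm (Dm k) (w k - X k)) ^ 2)
    (hback : ∀ k, τ k = 1 ∨ ∃ τhat : ℝ, 0 < τhat ∧ τhat ≤ min 1 (τ k / ωlow) ∧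
      f (X k + τhat • (w k - X k)) >
        f (X k) + σ * τhat * ⟪g (X k), w k - X k⟫ + ν k) :
    ∀ k, min 1 (ωlow * (1 - σ) / (αmax * μ * L)) ≤ τ k := by
  intro k
  rcases hback k with h1 | ⟨τh, hτh0, hτhle, hfail⟩
  · rw [h1]; exact min_le_left _ _
  set x := X k with hx
  set wk := w k with hwk
  set d := wk - x with hd
  set A := α k with hA
  set D := Dm k with hD
  obtain ⟨hA0, hAmax⟩ := hα k
  have hμ0 : (0:ℝ) < μ := lt_of_lt_of_le one_pos hμ
  by_cases hdz : d = 0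
  · exfalso
    rw [hdz] at hfail
    simp only [smul_zero, add_zero, inner_zero_right, mul_zero] at hfail
    linarith [hν k]
  -- key inequality
  have hN0 : (0:ℝ) < ‖d‖ ^ 2 := pow_pos (norm_pos_iff.mpr hdz) 2
  set Q := dipr D (x - wk) (x - wk) with hQdef
  set I := (⟪g x, x - wk⟫ : ℝ) with hIdef
  have hQ1 : (1 / μ) * ‖x - wk‖ ^ 2 ≤ Q := dipr_ge (hpos k) (fun i => (heig k i).1) _
  have hnorm_eq : ‖x - wk‖ = ‖d‖ := by rw [hd, norm_sub_rev]
  have hQ2 : (1 / μ) * ‖d‖ ^ 2 ≤ Q := by rwa [hnorm_eq] at hQ1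
  have hQpos : 0 < Q := lt_of_lt_of_le (by positivity) hQ2
  -- dnorm squared equals Q
  have hdn : (dnorm D (wk - x)) ^ 2 = Q := by
    have hflip : dipr D (wk - x) (wk - x) = Q := by
      have h1 : wk - x = -(x - wk) := by abel
      rw [hQdef, dipr, dipr, h1, map_neg, inner_neg_neg]
    have hnn : 0 ≤ dipr D (wk - x) (wk - x) := by
      refine le_trans ?_ (dipr_ge (hpos k) (fun i => (heig k i).1) (wk - x))
      positivity
    rw [dnorm, Real.sq_sqrt hnn, hflip]
  -- expansion of the A1 condition at y = x
  have hkey := (hA1 k).2 x (hXC k)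
  rw [hdn] at hkey
  have hexp : dipr D (z k - wk) (x - wk) = Q - A * I := by
    have hzw : z k - wk = (x - wk) - A • (Matrix.toEuclideanLin D⁻¹) (g x) := by
      rw [hz k, ← hx, ← hA, ← hD, sub_right_comm]
    rw [hzw, dipr, map_sub, map_smul, inner_sub_left, real_inner_smul_left,
      toEuclideanLin_inv_cancel (hpos k), hQdef, dipr, hIdef]
  rw [hexp] at hkey
  clear_value Q I
  have hζk0 : (0:ℝ) ≤ ζ k := by linarith [(hζ k).1, hζmin.1]
  have hAI : Q / 2 ≤ A * I := by nlinarith [mul_nonneg hQpos.le hζk0]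
  have hIpos : 0 < I := by nlinarith [hAI, hQpos, hA0]
  -- descent lemma at y = x + τh • d
  have hdes := descent f g hf L hL.le hLip x (x + τh • d)
  have hy : (x + τh • d) - x = τh • d := by abel
  rw [hy, real_inner_smul_right, norm_smul, Real.norm_eq_abs,
    abs_of_pos hτh0, mul_pow] at hdes
  have hinn : (⟪g x, d⟫ : ℝ) = -I := by
    rw [hIdef, hd, ← inner_neg_right]
    congr 1
    abel
  rw [hinn] at hdes hfail
  -- from hfail and hdes and ν k ≥ 0 : (1-σ) * τh * I < L/2 * τh^2 * ‖d‖^2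
  have hstep : τh * ((1 - σ) * I) < τh * (L / 2 * (τh * ‖d‖ ^ 2)) := by
    nlinarith [hν k]
  have hstep2 : (1 - σ) * I < L / 2 * (τh * ‖d‖ ^ 2) :=
    lt_of_mul_lt_mul_left hstep hτh0.le
  -- conclude (1-σ) < L * τh * (A * μ)
  have e1 : ‖d‖ ^ 2 ≤ μ * Q := by
    have h2 := hQ2
    rw [one_div, inv_mul_le_iff₀ hμ0] at h2
    exact h2
  have e2 : (1 - σ) * ‖d‖ ^ 2 ≤ (2 * A * μ) * ((1 - σ) * I) := by
    have c1 : (1 - σ) * ‖d‖ ^ 2 ≤ (1 - σ) * (μ * Q) :=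
      mul_le_mul_of_nonneg_left e1 (by linarith [hσ.2])
    have c2 : μ * Q ≤ μ * (2 * (A * I)) :=
      mul_le_mul_of_nonneg_left (by linarith [hAI]) hμ0.le
    have c3 : (1 - σ) * (μ * Q) ≤ (1 - σ) * (μ * (2 * (A * I))) :=
      mul_le_mul_of_nonneg_left c2 (by linarith [hσ.2])
    nlinarith [c1, c3]
  have e4 : (2 * A * μ) * ((1 - σ) * I) < (2 * A * μ) * (L / 2 * (τh * ‖d‖ ^ 2)) :=
    mul_lt_mul_of_pos_left hstep2 (by positivity)
  have hfinal : (1 - σ) < L * τh * (A * μ) :=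
    lt_of_mul_lt_mul_right (by nlinarith [e2, e4]) hN0.le
  -- τh ≥ (1-σ)/(αmax μ L) and τ k ≥ ωlow τh
  have hτh_lb : (1 - σ) / (αmax * μ * L) ≤ τh := by
    rw [div_le_iff₀ (by positivity)]
    nlinarith [hfinal, mul_le_mul_of_nonneg_left hAmax
      (by positivity : (0:ℝ) ≤ τh * μ * L)]
  have hωτ : ωlow * τh ≤ τ k := by
    have h2 : τh ≤ τ k / ωlow := le_trans hτhle (min_le_right _ _)
    rw [le_div_iff₀ hω.1] at h2
    linarith [h2]
  have hτmin : ωlow * (1 - σ) / (αmax * μ * L) ≤ τ k :=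
    calc ωlow * (1 - σ) / (αmax * μ * L)
        = ωlow * ((1 - σ) / (αmax * μ * L)) := by ring
      _ ≤ ωlow * τh := mul_le_mul_of_nonneg_left hτh_lb hω.1.le
      _ ≤ τ k := hωτ
  exact le_trans (min_le_right _ _) hτmin
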